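/- Let Y ∈ ℝ^{N×M}, and let S = (1/M) Y Yᵀ with eigen-decomposition having eigenvalues λ_1 ≥ … ≥ λ_N ≥ 0 and orthonormal eigenvectors u_1, …, u_N. Fix σ² > 0 and Q ≤ N. Suppose X = U_Q (Λ_Q − σ² I_Q)^{1/2} R, where U_Q consists of Q of the eigenvectors, Λ_Q is diagonal with [Λ_Q]_{ii} equal to either the eigenvalue λ corresponding to the i-th chosen eigenvector (with λ ≥ σ²) or σ², and R is an orthogonal Q×Q matrix. Then X satisfies the stationarity equation (1/M) Y Yᵀ (X Xᵀ + σ² I_N)⁻¹ X = X. -/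

import Mathlib

open Matrix

/-- Stationary points of the dual probabilistic PCA log-likelihood: if
`X = U_Q (Λ_Q − σ² I_Q)^{1/2} R` where the columns of `U_Q` are orthonormal, each diagonal
entry `d i` of `Λ_Q` is either `σ²` or an eigenvalue `λ ≥ σ²` of `S = (1/M) Y Yᵀ` whose
eigenvector is the `i`-th column of `U_Q`, and `R` is orthogonal, then `X` satisfies the
stationarity equation `S (X Xᵀ + σ² I_N)⁻¹ X = X`. -/
theorem dppca_stationary_points {N M Q : ℕ} (hM : 0 < M)
    (Y : Matrix (Fin N) (Fin M) ℝ) (σ2 : ℝ) (hσ : 0 < σ2)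
    (U : Matrix (Fin N) (Fin Q) ℝ) (hU : Uᵀ * U = 1)
    (d : Fin Q → ℝ)
    (hd : ∀ i, d i = σ2 ∨ (σ2 ≤ d i ∧
      ((1 / (M : ℝ)) • (Y * Yᵀ)) *ᵥ (fun j => U j i) = d i • (fun j => U j i)))
    (R : Matrix (Fin Q) (Fin Q) ℝ) (hR : Rᵀ * R = 1 ∧ R * Rᵀ = 1)
    (X : Matrix (Fin N) (Fin Q) ℝ)
    (hX : X = U * Matrix.diagonal (fun i => Real.sqrt (d i - σ2)) * R) :
    ((1 / (M : ℝ)) • (Y * Yᵀ)) * (X * Xᵀ + σ2 • (1 : Matrix (Fin N) (Fin N) ℝ))⁻¹ * X = X := by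
  have hσ0 : σ2 ≠ 0 := ne_of_gt hσ
  have hdge : ∀ i, σ2 ≤ d i := fun i => by
    rcases hd i with h | h
    · exact h ▸ le_refl _
    · exact h.1
  have hdpos : ∀ i, 0 < d i := fun i => lt_of_lt_of_le hσ (hdge i)
  have hd0 : ∀ i, d i ≠ 0 := fun i => (hdpos i).ne'
  have hsub : ∀ i, 0 ≤ d i - σ2 := fun i => sub_nonneg.2 (hdge i)
  set S : Matrix (Fin N) (Fin N) ℝ := (1 / (M : ℝ)) • (Y * Yᵀ) with hS
  set Ds : Matrix (Fin Q) (Fin Q) ℝ :=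
    Matrix.diagonal (fun i => Real.sqrt (d i - σ2)) with hDs
  set D' : Matrix (Fin Q) (Fin Q) ℝ := Matrix.diagonal (fun i => d i - σ2) with hD'
  set E : Matrix (Fin Q) (Fin Q) ℝ :=
    Matrix.diagonal (fun i => (σ2 - d i) / (σ2 * d i)) with hE
  have hU' : ∀ {m : Type} (A : Matrix (Fin Q) m ℝ), Uᵀ * (U * A) = A := fun A => by
    rw [← Matrix.mul_assoc, hU, Matrix.one_mul]
  -- X Xᵀ = U D' Uᵀ
  have hXXt : X * Xᵀ = U * D' * Uᵀ := by
    have hDsDs : Ds * Ds = D' := by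
      rw [hDs, hD', Matrix.diagonal_mul_diagonal]
      exact congrArg Matrix.diagonal (funext fun i => Real.mul_self_sqrt (hsub i))
    calc X * Xᵀ = U * Ds * (R * Rᵀ) * Ds * Uᵀ := by
          rw [hX]
          simp only [Matrix.transpose_mul, Matrix.diagonal_transpose, Matrix.mul_assoc, hDs]
      _ = U * (Ds * Ds) * Uᵀ := by
          rw [hR.2]
          simp only [Matrix.mul_one, Matrix.mul_assoc]
      _ = U * D' * Uᵀ := by rw [hDsDs]
  -- the explicit inverse
  set Kinv : Matrix (Fin N) (Fin N) ℝ :=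
    U * E * Uᵀ + σ2⁻¹ • (1 : Matrix (Fin N) (Fin N) ℝ) with hKinv
  have hzero : D' * E + σ2⁻¹ • D' + σ2 • E = 0 := by
    rw [hD', hE]
    ext i j
    rcases eq_or_ne i j with rfl | h
    · simp only [Matrix.add_apply, Matrix.smul_apply, Matrix.diagonal_mul_diagonal,
        Matrix.diagonal_apply_eq, smul_eq_mul, Matrix.zero_apply]
      field_simp [hσ0, hd0 i]
      ring
    · simp [Matrix.diagonal_apply_ne _ h, Matrix.diagonal_mul_diagonal]
  have hright : (X * Xᵀ + σ2 • (1 : Matrix (Fin N) (Fin N) ℝ)) * Kinv = 1 := by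
    rw [hXXt, hKinv]
    have expand : (U * D' * Uᵀ + σ2 • (1 : Matrix (Fin N) (Fin N) ℝ)) *
        (U * E * Uᵀ + σ2⁻¹ • (1 : Matrix (Fin N) (Fin N) ℝ)) =
        U * (D' * E + σ2⁻¹ • D' + σ2 • E) * Uᵀ +
          (σ2 * σ2⁻¹) • (1 : Matrix (Fin N) (Fin N) ℝ) := by
      rw [Matrix.add_mul, Matrix.mul_add, Matrix.mul_add]
      have h1 : U * D' * Uᵀ * (U * E * Uᵀ) = U * (D' * E) * Uᵀ := by
        calc U * D' * Uᵀ * (U * E * Uᵀ) = U * (D' * (E * Uᵀ)) := by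
              simp only [Matrix.mul_assoc, hU']
          _ = U * (D' * E) * Uᵀ := by simp only [Matrix.mul_assoc]
      have h2 : U * D' * Uᵀ * (σ2⁻¹ • (1 : Matrix (Fin N) (Fin N) ℝ)) =
          σ2⁻¹ • (U * D' * Uᵀ) := by
        rw [Matrix.mul_smul, Matrix.mul_one]
      have h3 : (σ2 • (1 : Matrix (Fin N) (Fin N) ℝ)) * (U * E * Uᵀ) =
          σ2 • (U * E * Uᵀ) := by
        rw [Matrix.smul_mul, Matrix.one_mul]
      have h4 : (σ2 • (1 : Matrix (Fin N) (Fin N) ℝ)) *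
          (σ2⁻¹ • (1 : Matrix (Fin N) (Fin N) ℝ)) =
          (σ2 * σ2⁻¹) • (1 : Matrix (Fin N) (Fin N) ℝ) := by
        rw [Matrix.smul_mul, Matrix.mul_smul, Matrix.one_mul, smul_smul]
      rw [h1, h2, h3, h4]
      have h5 : U * (D' * E + σ2⁻¹ • D' + σ2 • E) * Uᵀ =
          U * (D' * E) * Uᵀ + σ2⁻¹ • (U * D' * Uᵀ) + σ2 • (U * E * Uᵀ) := by
        rw [Matrix.mul_add, Matrix.mul_add, Matrix.add_mul, Matrix.add_mul,
          Matrix.mul_smul, Matrix.smul_mul, Matrix.mul_smul, Matrix.smul_mul]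
      rw [h5]
      abel
    rw [expand, hzero, Matrix.mul_zero, Matrix.zero_mul, zero_add,
      mul_inv_cancel₀ hσ0, one_smul]
  have hinv : (X * Xᵀ + σ2 • (1 : Matrix (Fin N) (Fin N) ℝ))⁻¹ = Kinv :=
    Matrix.inv_eq_right_inv hright
  -- Kinv * X = U * diagonal g * R
  set g : Fin Q → ℝ := fun i => Real.sqrt (d i - σ2) / d i with hg
  have hKX : Kinv * X = U * Matrix.diagonal g * R := by
    rw [hKinv, hX]
    have h1 : U * E * Uᵀ * (U * Ds * R) = U * (E * Ds) * R := by
      calc U * E * Uᵀ * (U * Ds * R) = U * (E * (Ds * R)) := by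
            simp only [Matrix.mul_assoc, hU']
        _ = U * (E * Ds) * R := by simp only [Matrix.mul_assoc]
    have h2 : σ2⁻¹ • (1 : Matrix (Fin N) (Fin N) ℝ) * (U * Ds * R) =
        U * (σ2⁻¹ • Ds) * R := by
      rw [Matrix.smul_mul, Matrix.one_mul, Matrix.mul_smul, Matrix.smul_mul]
    have h3 : E * Ds + σ2⁻¹ • Ds = Matrix.diagonal g := by
      rw [hE, hDs, hg]
      ext i j
      rcases eq_or_ne i j with rfl | h
      · simp only [Matrix.add_apply, Matrix.smul_apply, Matrix.diagonal_mul_diagonal,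
          Matrix.diagonal_apply_eq, smul_eq_mul]
        field_simp [hσ0, hd0 i]
        ring
      · simp [Matrix.diagonal_apply_ne _ h, Matrix.diagonal_mul_diagonal]
    rw [Matrix.add_mul, h1, h2, ← Matrix.add_mul, ← Matrix.mul_add, h3]
  -- the eigenvalue computation
  have hSU : S * (U * Matrix.diagonal g) = U * Ds := by
    ext j i
    have hL : (S * (U * Matrix.diagonal g)) j i =
        (S *ᵥ (fun k => U k i)) j * g i := by
      rw [← Matrix.mul_assoc, Matrix.mul_diagonal]
      congr 1
    have hRt : (U * Ds) j i = U j i * Real.sqrt (d i - σ2) := by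
      rw [hDs, Matrix.mul_diagonal]
    rw [hL, hRt]
    rcases hd i with h | h
    · have : Real.sqrt (d i - σ2) = 0 := by rw [h, sub_self, Real.sqrt_zero]
      rw [hg]
      simp [this]
    · have heig : (S *ᵥ (fun k => U k i)) j = d i * U j i := by
        rw [hS, h.2]
        simp
      rw [heig, hg]
      field_simp [hd0 i]
  -- assemble
  rw [hinv, Matrix.mul_assoc, hKX, ← Matrix.mul_assoc, hSU]
  exact hX.symm
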